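/- Let P be a finite poset and R a commutative unital ring. Set Z^3_1(P,R) = J^3_1(P,R) and Z^3_2(P,R) = [Z^3_1(P,R), Z^3_1(P,R)]. Then Z^3_2(P,R) equals Z^3_1(P,R)·Z^3_1(P,R) (the R-span of products fg with f,g ∈ Z^3_1(P,R)), and equals the internal direct sum of the R-span of {e_{xxy} + e_{xyy} : x < y, l(x,y) = 1} and J^3_2(P,R). In particular, Z^3_2(P,R) is closed under the multiplication of I^3(P,R). -/

import Mathlib

/-- 3-flags (chains x ≤ y ≤ z) in a poset `P`. -/
abbrev Flag3 (P : Type*) [PartialOrder P] : Type _ :=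
  {t : P × P × P // t.1 ≤ t.2.1 ∧ t.2.1 ≤ t.2.2}

/-- `ell x y` is the length of the interval `[x,y]`, i.e. the maximal cardinality of a
chain in `[x,y]` minus one. -/
noncomputable def ell {P : Type*} [PartialOrder P] (x y : P) : ℕ∞ :=
  (Set.Icc x y).chainHeight (· < ·) - 1

section PreDefs

variable (P R : Type*) [PartialOrder P] [LocallyFiniteOrder P] [CommRing R]

/-- The multiplication of the partial flag incidence algebra `I^3(P,R)`. -/
def mul3 : (Flag3 P → R) → (Flag3 P → R) → (Flag3 P → R) := fun f g t =>
  ∑ p ∈ ((Finset.Icc t.1.1 t.1.2.1) ×ˢ (Finset.Icc t.1.2.1 t.1.2.2)).attach,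
    f ⟨(t.1.1, p.1.1, p.1.2), by
        obtain ⟨h1, h2⟩ := Finset.mem_product.mp p.2
        rw [Finset.mem_Icc] at h1 h2
        exact ⟨h1.1, h1.2.trans h2.1⟩⟩ *
    g ⟨(p.1.1, p.1.2, t.1.2.2), by
        obtain ⟨h1, h2⟩ := Finset.mem_product.mp p.2
        rw [Finset.mem_Icc] at h1 h2
        exact ⟨h1.2.trans h2.1, h2.2⟩⟩

variable {P}

/-- The standard basis element `e_t` of `I^3(P,R)`. -/
def e3 [DecidableEq P] (t0 : Flag3 P) : Flag3 P → R := fun t => if t = t0 then 1 else 0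

variable (P)

/-- The ideal `J^3_k(P,R)` of functions vanishing on flags `(x,y,z)` with `l(x,z) < k`. -/
def J3 (k : ℕ) : Submodule R (Flag3 P → R) where
  carrier := {f | ∀ t : Flag3 P, ell t.1.1 t.1.2.2 < (k : ℕ∞) → f t = 0}
  add_mem' := by
    intro f g hf hg t ht
    simp only [Pi.add_apply, hf t ht, hg t ht, add_zero]
  zero_mem' := by intro t _; rfl
  smul_mem' := by
    intro c f hf t ht
    simp only [Pi.smul_apply, hf t ht, smul_zero]

/-- The commutator submodule `[U,V]`. -/
def commSub (U V : Submodule R (Flag3 P → R)) : Submodule R (Flag3 P → R) :=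
  Submodule.span R {h | ∃ f ∈ U, ∃ g ∈ V, h = mul3 P R f g - mul3 P R g f}

end PreDefs

/-- The span of the idempotents `e_{xxy} + e_{xyy}` over the covering pairs `x < y`,
`l(x,y) = 1`. -/
def covPairSpan (P R : Type*) [PartialOrder P] [DecidableEq P] [CommRing R] :
    Submodule R (Flag3 P → R) :=
  Submodule.span R {h | ∃ x y : P, ∃ hxy : x < y, ell x y = 1 ∧
    h = e3 R (⟨(x, x, y), le_rfl, hxy.le⟩ : Flag3 P) +
        e3 R (⟨(x, y, y), hxy.le, le_rfl⟩ : Flag3 P)}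


/-! ### Auxiliary lemmas -/

section EllLemmas
variable {P : Type*} [PartialOrder P]

lemma ell_self' (x : P) : ell x x = 0 := by
  have h : (Set.Icc x x).chainHeight (· < ·) ≤ 1 :=
    (Set.chainHeight_le_encard _ _).trans (by simp)
  have : ell x x ≤ 1 - 1 := tsub_le_tsub_right h 1
  simpa [ell] using this

lemma one_le_ell' {x y : P} (h : x < y) : 1 ≤ ell x y := by
  have h2 : ((2:ℕ) : ℕ∞) ≤ (Set.Icc x y).chainHeight (· < ·) := by
    have hc : IsChain (· < ·) ({x, y} : Set P) := by
      intro a ha b hb hab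
      simp only [Set.mem_insert_iff, Set.mem_singleton_iff] at ha hb
      rcases ha with rfl | rfl <;> rcases hb with rfl | rfl <;> simp_all
    have := Set.encard_le_chainHeight_of_isChain (Set.Icc x y) {x, y}
      (by intro i hi; simp only [Set.mem_insert_iff, Set.mem_singleton_iff] at hi
          rcases hi with rfl | rfl <;> simp [h.le]) hc
    rw [Set.encard_pair h.ne] at this
    exact_mod_cast this
  exact ENat.le_sub_of_add_le_left (by simp) (by exact_mod_cast h2)

lemma two_le_ell' {x w y : P} (h1 : x < w) (h2 : w < y) : 2 ≤ ell x y := by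
  have h3 : ((3:ℕ) : ℕ∞) ≤ (Set.Icc x y).chainHeight (· < ·) := by
    have h13 := h1.trans h2
    have hc : IsChain (· < ·) ({x, w, y} : Set P) := by
      intro a ha b hb hab
      simp only [Set.mem_insert_iff, Set.mem_singleton_iff] at ha hb
      rcases ha with rfl | rfl | rfl <;> rcases hb with rfl | rfl | rfl <;> simp_all
    have := Set.encard_le_chainHeight_of_isChain (Set.Icc x y) {x, w, y}
      (by intro i hi; simp only [Set.mem_insert_iff, Set.mem_singleton_iff] at hi
          rcases hi with rfl | rfl | rfl <;> simp [h1.le, h2.le, h13.le]) hc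
    rw [Set.encard_eq_three.mpr ⟨x, w, y, h1.ne, h13.ne, h2.ne, rfl⟩] at this
    exact_mod_cast this
  have : (1 : ℕ∞) + 2 ≤ (Set.Icc x y).chainHeight (· < ·) := by exact_mod_cast h3
  exact ENat.le_sub_of_add_le_left (by simp) this

lemma exists_mid_of_two_le_ell {x y : P} (h : 2 ≤ ell x y) :
    ∃ w, x < w ∧ w < y := by
  have hc1 : (1 : ℕ∞) ≤ (Set.Icc x y).chainHeight (· < ·) :=
    le_trans (by norm_num) (h.trans tsub_le_self)
  have h3 : ((3:ℕ) : ℕ∞) ≤ (Set.Icc x y).chainHeight (· < ·) := by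
    have := add_le_add h (le_refl (1 : ℕ∞))
    rw [ell, tsub_add_cancel_of_le hc1] at this
    exact_mod_cast this
  obtain ⟨t, hts, hte, -⟩ := Set.exists_isChain_of_le_chainHeight 3 h3
  obtain ⟨a, b, c, hab, hac, hbc, rfl⟩ := Set.encard_eq_three.mp hte
  by_contra hno
  push_neg at hno
  have f : ∀ m, m ∈ ({a, b, c} : Set P) → m = x ∨ m = y := by
    intro m hm
    have hm' := hts hm
    rw [Set.mem_Icc] at hm'
    by_cases hmx : m = x
    · exact Or.inl hmx
    · exact Or.inr ((lt_or_eq_of_le hm'.2).resolve_left (hno m (lt_of_le_of_ne hm'.1 (Ne.symm hmx))))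
  rcases f a (by simp) with h1 | h1 <;> rcases f b (by simp) with h2 | h2 <;>
    rcases f c (by simp) with h3 | h3 <;> simp_all

lemma eq_of_ell_lt_one {x y : P} (hxy : x ≤ y) (h : ell x y < 1) : x = y := by
  by_contra hne
  exact absurd h (not_lt.mpr (one_le_ell' (lt_of_le_of_ne hxy hne)))

lemma mem_of_ell_eq_one {x y b : P} (h : ell x y = 1) (hxb : x ≤ b) (hby : b ≤ y) :
    b = x ∨ b = y := by
  by_contra hne
  push_neg at hne
  have := two_le_ell' (lt_of_le_of_ne hxb (Ne.symm hne.1)) (lt_of_le_of_ne hby hne.2)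
  rw [h] at this
  norm_num at this

lemma ne_of_ell_eq_one {x y : P} (h : ell x y = 1) : x ≠ y := by
  rintro rfl
  rw [ell_self'] at h
  norm_num at h

lemma ENat.eq_one_of_lt_two {e : ℕ∞} (h1 : 1 ≤ e) (h2 : e < 2) : e = 1 := by
  induction e using ENat.recTopCoe with
  | top => exact absurd h2 (by simp)
  | coe n =>
    have h1' : 1 ≤ n := by exact_mod_cast h1
    have h2' : n < 2 := by exact_mod_cast h2
    norm_cast
    omega

end EllLemmas

section FlagLemmas
variable {P : Type*} [PartialOrder P]

lemma flag_diag (s : Flag3 P) (h : s.1.1 = s.1.2.2) :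
    s = ⟨(s.1.1, s.1.1, s.1.1), le_rfl, le_rfl⟩ := by
  obtain ⟨⟨a, b, c⟩, hab, hbc⟩ := s
  simp only at h hab hbc ⊢
  subst h
  have hba : b = a := le_antisymm hbc hab
  exact Subtype.ext (by simp [hba])

end FlagLemmas

section Comp

variable {P R : Type*} [PartialOrder P] [DecidableEq P] [LocallyFiniteOrder P] [CommRing R]

lemma mem_J3_iff {k : ℕ} {f : Flag3 P → R} :
    f ∈ J3 P R k ↔ ∀ t : Flag3 P, ell t.1.1 t.1.2.2 < (k : ℕ∞) → f t = 0 := Iff.rfl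

lemma e3_mem_J1 (t : Flag3 P) (h : t.1.1 ≠ t.1.2.2) : e3 R t ∈ J3 P R 1 := by
  intro s hs
  have hd : s.1.1 = s.1.2.2 := eq_of_ell_lt_one (s.2.1.trans s.2.2) (by simpa using hs)
  rw [e3, if_neg]
  exact fun hst => h (hst ▸ hd)

open Classical in
/-- indicator of flags (x, b, z) with u ≤ b ≤ v -/
noncomputable def ind (x u v z : P) : Flag3 P → R := fun t =>
  if t.1.1 = x ∧ t.1.2.2 = z ∧ u ≤ t.1.2.1 ∧ t.1.2.1 ≤ v then 1 else 0

lemma mul3_e3_e3 {x u v z : P} (hxu : x ≤ u) (huv : u ≤ v) (hvz : v ≤ z) :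
    mul3 P R (e3 R ⟨(x,u,v),⟨hxu,huv⟩⟩) (e3 R ⟨(u,v,z),⟨huv,hvz⟩⟩) = ind x u v z := by
  funext t
  obtain ⟨⟨a,y,c⟩, hay, hyc⟩ := t
  simp only [mul3, e3, ind, Subtype.mk.injEq, Prod.mk.injEq]
  by_cases hcond : a = x ∧ c = z ∧ u ≤ y ∧ y ≤ v
  · obtain ⟨rfl, rfl, huy, hyv⟩ := hcond
    rw [if_pos ⟨rfl, rfl, huy, hyv⟩]
    rw [Finset.sum_eq_single_of_mem
      (⟨(u, v), by simp [Finset.mem_Icc, hxu, huy, hyv, hvz]⟩ :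
        {p // p ∈ (Finset.Icc a y) ×ˢ (Finset.Icc y c)})
      (Finset.mem_attach _ _)]
    · simp
    · intro p _ hp
      have hne : ¬(p.1.1 = u ∧ p.1.2 = v) := by
        intro ⟨h1, h2⟩
        exact hp (Subtype.ext (Prod.ext h1 h2))
      rw [if_neg (fun h => hne ⟨h.2.1, h.2.2⟩), zero_mul]
  · rw [if_neg hcond]
    apply Finset.sum_eq_zero
    intro p _
    by_cases hA : a = x ∧ p.1.1 = u ∧ p.1.2 = v
    · by_cases hB : p.1.1 = u ∧ p.1.2 = v ∧ c = z
      · exfalso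
        obtain ⟨rfl, hu, hv⟩ := hA
        obtain ⟨hm1, hm2⟩ := Finset.mem_product.mp p.2
        rw [Finset.mem_Icc] at hm1 hm2
        exact hcond ⟨rfl, hB.2.2, hu ▸ hm1.2, hv ▸ hm2.1⟩
      · rw [if_neg hB, mul_zero]
    · rw [if_neg hA, zero_mul]

lemma mul3_e3_e3_rev {x u v z : P} (hxu : x ≤ u) (huv : u ≤ v) (hvz : v ≤ z)
    (hxz : x ≠ z) :
    mul3 P R (e3 R ⟨(u,v,z),⟨huv,hvz⟩⟩) (e3 R ⟨(x,u,v),⟨hxu,huv⟩⟩) = 0 := by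
  funext t
  obtain ⟨⟨a,y,c⟩, hay, hyc⟩ := t
  simp only [mul3, e3, Subtype.mk.injEq, Prod.mk.injEq, Pi.zero_apply]
  apply Finset.sum_eq_zero
  intro p _
  by_cases hA : a = u ∧ p.1.1 = v ∧ p.1.2 = z
  · by_cases hB : p.1.1 = x ∧ p.1.2 = u ∧ c = v
    · exfalso
      have hvx : v = x := hA.2.1.symm.trans hB.1
      have hzu : z = u := hA.2.2.symm.trans hB.2.1
      have hzx : z ≤ x := by rw [hzu, ← hvx]; exact huv
      exact hxz (le_antisymm (hxu.trans (huv.trans hvz)) hzx)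
    · rw [if_neg hB, mul_zero]
  · rw [if_neg hA, zero_mul]

lemma ind_eq_sum {x u v z : P} (hxu : x ≤ u) (huv : u ≤ v) (hvz : v ≤ z) :
    (ind x u v z : Flag3 P → R) =
      ∑ b ∈ (Finset.Icc u v).attach,
        e3 R ⟨(x, b.1, z), ⟨hxu.trans (Finset.mem_Icc.mp b.2).1,
          (Finset.mem_Icc.mp b.2).2.trans hvz⟩⟩ := by
  funext t
  obtain ⟨⟨a,y,c⟩, hay, hyc⟩ := t
  simp only [ind, Finset.sum_apply, e3, Subtype.mk.injEq, Prod.mk.injEq]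
  by_cases hcond : a = x ∧ c = z ∧ u ≤ y ∧ y ≤ v
  · obtain ⟨rfl, rfl, huy, hyv⟩ := hcond
    rw [if_pos ⟨rfl, rfl, huy, hyv⟩]
    rw [Finset.sum_eq_single_of_mem (⟨y, Finset.mem_Icc.mpr ⟨huy, hyv⟩⟩ :
        {b // b ∈ Finset.Icc u v}) (Finset.mem_attach _ _)]
    · simp
    · intro b _ hb
      rw [if_neg]
      intro ⟨_, h2, _⟩
      exact hb (Subtype.ext h2.symm)
  · rw [if_neg hcond]
    apply (Finset.sum_eq_zero _).symm
    intro b _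
    rw [if_neg]
    intro ⟨h1, h2, h3⟩
    have hb := Finset.mem_Icc.mp b.2
    exact hcond ⟨h1, h3, h2 ▸ hb.1, h2 ▸ hb.2⟩

lemma ind_mem_commSub {x u v z : P} (hxu : x ≤ u) (huv : u ≤ v) (hvz : v ≤ z)
    (hxv : x < v) (huz : u < z) :
    (ind x u v z : Flag3 P → R) ∈ commSub P R (J3 P R 1) (J3 P R 1) := by
  apply Submodule.subset_span
  refine ⟨e3 R ⟨(x,u,v),⟨hxu,huv⟩⟩, e3_mem_J1 _ hxv.ne,
    e3 R ⟨(u,v,z),⟨huv,hvz⟩⟩, e3_mem_J1 _ huz.ne, ?_⟩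
  rw [mul3_e3_e3 hxu huv hvz, mul3_e3_e3_rev hxu huv hvz (hxu.trans_lt huz).ne, sub_zero]

lemma e3_eq_ind {x y z : P} (hxy : x < y) (hyz : y < z) :
    (e3 R (⟨(x,y,z),⟨hxy.le,hyz.le⟩⟩ : Flag3 P)) = ind x y y z := by
  funext t
  obtain ⟨⟨a,b,c⟩, hab, hbc⟩ := t
  classical
  simp only [e3, ind, Subtype.mk.injEq, Prod.mk.injEq]
  by_cases h : a = x ∧ b = y ∧ c = z
  · rw [if_pos h, if_pos ⟨h.1, h.2.2, h.2.1.ge, h.2.1.le⟩]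
  · rw [if_neg h, if_neg (fun hh => h ⟨hh.1, le_antisymm hh.2.2.2 hh.2.2.1, hh.2.1⟩)]

lemma e3_mem_commSub_of_lt_lt {x y z : P} (hxy : x < y) (hyz : y < z) :
    (e3 R (⟨(x,y,z),⟨hxy.le,hyz.le⟩⟩ : Flag3 P)) ∈ commSub P R (J3 P R 1) (J3 P R 1) := by
  rw [e3_eq_ind hxy hyz]
  exact ind_mem_commSub hxy.le le_rfl hyz.le (hxy.trans_le le_rfl) (hyz.trans_le le_rfl)

end Comp


section Comp2
variable {P R : Type*} [PartialOrder P] [DecidableEq P] [LocallyFiniteOrder P] [CommRing R]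

lemma e3_mem_commSub_xxz {x w z : P} (hw1 : x < w) (hw2 : w < z) :
    (e3 R (⟨(x,x,z), le_rfl, (hw1.trans hw2).le⟩ : Flag3 P))
      ∈ commSub P R (J3 P R 1) (J3 P R 1) := by
  classical
  set s := (Finset.Icc x w).attach with hs
  set b₀ : {b // b ∈ Finset.Icc x w} := ⟨x, Finset.mem_Icc.mpr ⟨le_rfl, hw1.le⟩⟩ with hb₀
  set F : {b // b ∈ Finset.Icc x w} → Flag3 P → R := fun b =>
    e3 R ⟨(x, b.1, z), ⟨(Finset.mem_Icc.mp b.2).1,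
      (Finset.mem_Icc.mp b.2).2.trans hw2.le⟩⟩ with hF
  have key : (ind x x w z : Flag3 P → R) = ∑ b ∈ s, F b :=
    (ind_eq_sum (R := R) (le_rfl : x ≤ x) hw1.le hw2.le).trans
      (Finset.sum_congr rfl (fun b _ => rfl))
  have key2 : F b₀ + ∑ b ∈ s.erase b₀, F b = ∑ b ∈ s, F b :=
    Finset.add_sum_erase s F (Finset.mem_attach _ b₀)
  have key3 : F b₀ = ind x x w z - ∑ b ∈ s.erase b₀, F b := by
    rw [key]; exact eq_sub_of_add_eq key2
  have hgoal : (e3 R (⟨(x,x,z), le_rfl, (hw1.trans hw2).le⟩ : Flag3 P)) = F b₀ := rfl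
  rw [hgoal, key3]
  refine sub_mem (ind_mem_commSub le_rfl hw1.le hw2.le hw1 (hw1.trans hw2)) ?_
  refine Submodule.sum_mem _ (fun b hb => ?_)
  have hne : b ≠ b₀ := (Finset.mem_erase.mp hb).1
  have hbx : x < b.1 :=
    lt_of_le_of_ne (Finset.mem_Icc.mp b.2).1 (fun hh => hne (Subtype.ext hh.symm))
  have hbz : b.1 < z := lt_of_le_of_lt (Finset.mem_Icc.mp b.2).2 hw2
  exact e3_mem_commSub_of_lt_lt hbx hbz

lemma e3_mem_commSub_xzz {x w z : P} (hw1 : x < w) (hw2 : w < z) :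
    (e3 R (⟨(x,z,z), (hw1.trans hw2).le, le_rfl⟩ : Flag3 P))
      ∈ commSub P R (J3 P R 1) (J3 P R 1) := by
  classical
  set s := (Finset.Icc w z).attach with hs
  set b₀ : {b // b ∈ Finset.Icc w z} := ⟨z, Finset.mem_Icc.mpr ⟨hw2.le, le_rfl⟩⟩ with hb₀
  set F : {b // b ∈ Finset.Icc w z} → Flag3 P → R := fun b =>
    e3 R ⟨(x, b.1, z), ⟨hw1.le.trans (Finset.mem_Icc.mp b.2).1,
      (Finset.mem_Icc.mp b.2).2⟩⟩ with hF
  have key : (ind x w z z : Flag3 P → R) = ∑ b ∈ s, F b :=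
    (ind_eq_sum (R := R) hw1.le hw2.le (le_rfl : z ≤ z)).trans
      (Finset.sum_congr rfl (fun b _ => rfl))
  have key2 : F b₀ + ∑ b ∈ s.erase b₀, F b = ∑ b ∈ s, F b :=
    Finset.add_sum_erase s F (Finset.mem_attach _ b₀)
  have key3 : F b₀ = ind x w z z - ∑ b ∈ s.erase b₀, F b := by
    rw [key]; exact eq_sub_of_add_eq key2
  have hgoal : (e3 R (⟨(x,z,z), (hw1.trans hw2).le, le_rfl⟩ : Flag3 P)) = F b₀ := rfl
  rw [hgoal, key3]
  refine sub_mem (ind_mem_commSub hw1.le hw2.le le_rfl (hw1.trans hw2) hw2) ?_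
  refine Submodule.sum_mem _ (fun b hb => ?_)
  have hne : b ≠ b₀ := (Finset.mem_erase.mp hb).1
  have hbz : b.1 < z :=
    lt_of_le_of_ne (Finset.mem_Icc.mp b.2).2 (fun hh => hne (Subtype.ext hh))
  have hbx : x < b.1 := lt_of_lt_of_le hw1 (Finset.mem_Icc.mp b.2).1
  exact e3_mem_commSub_of_lt_lt hbx hbz

lemma e3_mem_commSub {x y z : P} (hxy : x ≤ y) (hyz : y ≤ z) (h : 2 ≤ ell x z) :
    (e3 R (⟨(x,y,z),⟨hxy,hyz⟩⟩ : Flag3 P)) ∈ commSub P R (J3 P R 1) (J3 P R 1) := by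
  have hne : x ≠ z := by
    rintro rfl
    rw [ell_self'] at h
    exact absurd h (by norm_num)
  rcases eq_or_lt_of_le hxy with rfl | hxy'
  · obtain ⟨w, hw1, hw2⟩ := exists_mid_of_two_le_ell h
    exact e3_mem_commSub_xxz hw1 hw2
  · rcases eq_or_lt_of_le hyz with rfl | hyz'
    · obtain ⟨w, hw1, hw2⟩ := exists_mid_of_two_le_ell h
      exact e3_mem_commSub_xzz hw1 hw2
    · exact e3_mem_commSub_of_lt_lt hxy' hyz'

end Comp2


/-- the "W" submodule: functions vanishing on the diagonal and agreeing on the two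
flags attached to a covering pair -/
def Wsub (P R : Type*) [PartialOrder P] [CommRing R] : Submodule R (Flag3 P → R) where
  carrier := {f | (∀ x : P, f ⟨(x,x,x), le_rfl, le_rfl⟩ = 0) ∧
    ∀ (x z : P) (h : x ≤ z), ell x z = 1 →
      f ⟨(x,x,z), le_rfl, h⟩ = f ⟨(x,z,z), h, le_rfl⟩}
  add_mem' := by
    rintro f g ⟨hf1, hf2⟩ ⟨hg1, hg2⟩
    exact ⟨fun x => by simp [hf1 x, hg1 x], fun x z h he => by
      simp only [Pi.add_apply, hf2 x z h he, hg2 x z h he]⟩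
  zero_mem' := ⟨fun x => rfl, fun _ _ _ _ => rfl⟩
  smul_mem' := by
    rintro c f ⟨h1, h2⟩
    exact ⟨fun x => by simp [h1 x], fun x z h he => by
      simp only [Pi.smul_apply, h2 x z h he]⟩

/-- functions supported on flags with `ell = 1` -/
def S3sub (P R : Type*) [PartialOrder P] [CommRing R] : Submodule R (Flag3 P → R) where
  carrier := {f | ∀ t : Flag3 P, ell t.1.1 t.1.2.2 ≠ 1 → f t = 0}
  add_mem' := by intro f g hf hg t ht; simp [hf t ht, hg t ht]
  zero_mem' := fun _ _ => rfl
  smul_mem' := by intro c f hf t ht; simp [hf t ht]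

section WPart
variable {P R : Type*} [PartialOrder P] [DecidableEq P] [LocallyFiniteOrder P] [CommRing R]

lemma mul3_diag {f g : Flag3 P → R} (hf : f ∈ J3 P R 1) (x : P) :
    mul3 P R f g ⟨(x,x,x), le_rfl, le_rfl⟩ = 0 := by
  simp only [mul3]
  apply Finset.sum_eq_zero
  intro p _
  apply mul_eq_zero_of_left
  apply hf
  have hp := Finset.mem_product.mp p.2
  have h1 : p.1.2 = x :=
    le_antisymm (Finset.mem_Icc.mp hp.2).2 (Finset.mem_Icc.mp hp.2).1
  show ell x p.1.2 < ((1:ℕ):ℕ∞)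
  rw [h1, ell_self']
  norm_num

lemma mul3_xxz {f g : Flag3 P → R} (hf : f ∈ J3 P R 1) {x z : P} (hxz : x ≤ z)
    (hell : ell x z = 1) :
    mul3 P R f g ⟨(x,x,z), le_rfl, hxz⟩ =
      f ⟨(x,x,z), le_rfl, hxz⟩ * g ⟨(x,z,z), hxz, le_rfl⟩ := by
  simp only [mul3]
  rw [Finset.sum_eq_single_of_mem
    (⟨(x, z), by simp [Finset.mem_Icc, hxz]⟩ :
      {p // p ∈ (Finset.Icc x x) ×ˢ (Finset.Icc x z)}) (Finset.mem_attach _ _)]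
  · intro p _ hp
    have hp2 := Finset.mem_product.mp p.2
    have h1 : p.1.1 = x :=
      le_antisymm (Finset.mem_Icc.mp hp2.1).2 (Finset.mem_Icc.mp hp2.1).1
    have h2 := Finset.mem_Icc.mp hp2.2
    rcases mem_of_ell_eq_one hell h2.1 h2.2 with hx2 | hz2
    · apply mul_eq_zero_of_left
      apply hf
      show ell x p.1.2 < ((1:ℕ):ℕ∞)
      rw [hx2, ell_self']
      norm_num
    · exact absurd (Subtype.ext (Prod.ext h1 hz2)) hp

lemma mul3_xzz {f g : Flag3 P → R} (hg : g ∈ J3 P R 1) {x z : P} (hxz : x ≤ z)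
    (hell : ell x z = 1) :
    mul3 P R f g ⟨(x,z,z), hxz, le_rfl⟩ =
      f ⟨(x,x,z), le_rfl, hxz⟩ * g ⟨(x,z,z), hxz, le_rfl⟩ := by
  simp only [mul3]
  rw [Finset.sum_eq_single_of_mem
    (⟨(x, z), by simp [Finset.mem_Icc, hxz]⟩ :
      {p // p ∈ (Finset.Icc x z) ×ˢ (Finset.Icc z z)}) (Finset.mem_attach _ _)]
  · intro p _ hp
    have hp2 := Finset.mem_product.mp p.2
    have h2 : p.1.2 = z :=
      le_antisymm (Finset.mem_Icc.mp hp2.2).2 (Finset.mem_Icc.mp hp2.2).1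
    have h1 := Finset.mem_Icc.mp hp2.1
    rcases mem_of_ell_eq_one hell h1.1 h1.2 with hx1 | hz1
    · exact absurd (Subtype.ext (Prod.ext hx1 h2)) hp
    · apply mul_eq_zero_of_right
      apply hg
      show ell p.1.1 z < ((1:ℕ):ℕ∞)
      rw [hz1, ell_self']
      norm_num

lemma mul3_mem_W {f g : Flag3 P → R} (hf : f ∈ J3 P R 1) (hg : g ∈ J3 P R 1) :
    mul3 P R f g ∈ Wsub P R :=
  ⟨fun x => mul3_diag hf x, fun x z h he => by rw [mul3_xxz hf h he, mul3_xzz hg h he]⟩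

end WPart


section Incl
variable {P R : Type*} [PartialOrder P] [DecidableEq P] [LocallyFiniteOrder P] [CommRing R]

lemma e3_pair_eq_ind {x y : P} (hxy : x < y) (hell : ell x y = 1) :
    (e3 R (⟨(x,x,y), le_rfl, hxy.le⟩ : Flag3 P)
      + e3 R (⟨(x,y,y), hxy.le, le_rfl⟩ : Flag3 P)) = ind x x y y := by
  funext t
  obtain ⟨⟨a,b,c⟩, hab, hbc⟩ := t
  simp only [Pi.add_apply, e3, ind, Subtype.mk.injEq, Prod.mk.injEq]
  by_cases h1 : a = x ∧ b = x ∧ c = y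
  · rw [if_pos h1, if_neg (fun h2 => hxy.ne (h1.2.1.symm.trans h2.2.1)),
      if_pos ⟨h1.1, h1.2.2, h1.2.1.ge, h1.2.1.le.trans hxy.le⟩]
    norm_num
  · by_cases h2 : a = x ∧ b = y ∧ c = y
    · rw [if_neg h1, if_pos h2,
        if_pos ⟨h2.1, h2.2.2, hxy.le.trans h2.2.1.ge, h2.2.1.le⟩]
      norm_num
    · rw [if_neg h1, if_neg h2, if_neg, add_zero]
      rintro ⟨ha, hc, hxb, hby⟩
      rcases mem_of_ell_eq_one hell hxb hby with hb | hb
      · exact h1 ⟨ha, hb, hc⟩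
      · exact h2 ⟨ha, hb, hc⟩

lemma covPairSpan_le_commSub :
    covPairSpan P R ≤ commSub P R (J3 P R 1) (J3 P R 1) := by
  rw [covPairSpan, Submodule.span_le]
  rintro h ⟨x, y, hxy, hell, rfl⟩
  show _ ∈ commSub P R (J3 P R 1) (J3 P R 1)
  rw [e3_pair_eq_ind hxy hell]
  exact ind_mem_commSub le_rfl hxy.le le_rfl hxy hxy

lemma covPairSpan_le_S3 : covPairSpan P R ≤ S3sub P R := by
  rw [covPairSpan, Submodule.span_le]
  rintro h ⟨x, y, hxy, hell, rfl⟩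
  intro t ht
  simp only [Pi.add_apply, e3]
  rw [if_neg (fun hst => ht (by rw [hst]; exact hell)),
    if_neg (fun hst => ht (by rw [hst]; exact hell)), add_zero]

lemma commSub_le_J1 :
    commSub P R (J3 P R 1) (J3 P R 1) ≤ J3 P R 1 := by
  rw [commSub, Submodule.span_le]
  rintro h ⟨f, hf, g, hg, rfl⟩
  show _ ∈ J3 P R 1
  intro t ht
  have hd : t.1.1 = t.1.2.2 :=
    eq_of_ell_lt_one (t.2.1.trans t.2.2) (by simpa using ht)
  rw [flag_diag t hd]
  simp only [Pi.sub_apply]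
  rw [mul3_diag hf, mul3_diag hg, sub_zero]

end Incl


def mirror {P : Type*} [PartialOrder P] (s : Flag3 P) : Flag3 P :=
  ⟨(s.1.1, s.1.2.2, s.1.2.2), s.2.1.trans s.2.2, le_rfl⟩

section Big
variable {P R : Type*} [PartialOrder P] [Fintype P] [DecidableEq P]
  [LocallyFiniteOrder P] [CommRing R]

lemma eq_sum_e3 [Fintype (Flag3 P)] (f : Flag3 P → R) :
    f = ∑ t : Flag3 P, f t • e3 R t := by
  funext s
  rw [Finset.sum_apply]
  simp only [Pi.smul_apply, e3, smul_eq_mul, mul_ite, mul_one, mul_zero]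
  rw [Finset.sum_ite_eq]
  simp

lemma J3_two_le_commSub :
    J3 P R 2 ≤ commSub P R (J3 P R 1) (J3 P R 1) := by
  intro f hf
  classical
  letI : Fintype (Flag3 P) := Fintype.ofFinite _
  have hdec : f = ∑ t : Flag3 P, f t • e3 R t := eq_sum_e3 f
  rw [hdec]
  refine Submodule.sum_mem _ (fun t _ => ?_)
  by_cases h : ell t.1.1 t.1.2.2 < ((2:ℕ):ℕ∞)
  · rw [hf t h, zero_smul]
    exact Submodule.zero_mem _
  · refine Submodule.smul_mem _ _ ?_
    have h2 : 2 ≤ ell t.1.1 t.1.2.2 := by simpa using not_lt.mp h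
    exact e3_mem_commSub (x := t.1.1) (y := t.1.2.1) (z := t.1.2.2) t.2.1 t.2.2 h2

lemma W_le_sup : Wsub P R ≤ covPairSpan P R ⊔ J3 P R 2 := by
  intro f hf
  obtain ⟨hf1, hf2⟩ := hf
  classical
  letI : Fintype (Flag3 P) := Fintype.ofFinite _
  set A : Finset (Flag3 P) :=
    Finset.univ.filter (fun t => t.1.1 = t.1.2.1 ∧ ell t.1.1 t.1.2.2 = 1) with hA
  set g : Flag3 P → R := ∑ t ∈ A, f t • (e3 R t + e3 R (mirror t)) with hg
  have hgcov : g ∈ covPairSpan P R := by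
    refine Submodule.sum_mem _ (fun t ht => ?_)
    obtain ⟨-, hyx, hell⟩ := Finset.mem_filter.mp ht
    refine Submodule.smul_mem _ _ (Submodule.subset_span ?_)
    refine ⟨t.1.1, t.1.2.2,
      lt_of_le_of_ne (t.2.1.trans t.2.2) (ne_of_ell_eq_one hell), hell, ?_⟩
    congr 1
    exact congrArg (e3 R) (Subtype.ext (Prod.ext rfl (Prod.ext hyx.symm rfl)))
  have hfg : f - g ∈ J3 P R 2 := by
    intro s hs
    simp only [Pi.sub_apply]
    by_cases hd : s.1.1 = s.1.2.2
    · have hfs : f s = 0 := by rw [flag_diag s hd]; exact hf1 _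
      have hgs : g s = 0 := by
        rw [hg, Finset.sum_apply]
        refine Finset.sum_eq_zero (fun t ht => ?_)
        obtain ⟨-, hyx, hell⟩ := Finset.mem_filter.mp ht
        have h1 : e3 R t s = 0 := by
          rw [e3, if_neg]
          intro hst
          exact (ne_of_ell_eq_one hell) (by rw [hst] at hd; exact hd)
        have h2 : e3 R (mirror t) s = 0 := by
          rw [e3, if_neg]
          intro hst
          apply ne_of_ell_eq_one hell
          have e1 := congrArg (fun u : Flag3 P => u.1.1) hst
          have e2 := congrArg (fun u : Flag3 P => u.1.2.2) hst
          exact (e1.symm.trans hd).trans e2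
        simp [h1, h2]
      rw [hfs, hgs, sub_zero]
    · have hlt : s.1.1 < s.1.2.2 := lt_of_le_of_ne (s.2.1.trans s.2.2) hd
      have hell1 : ell s.1.1 s.1.2.2 = 1 :=
        ENat.eq_one_of_lt_two (one_le_ell' hlt) (by simpa using hs)
      by_cases hy : s.1.2.1 = s.1.1
      · have hsA : s ∈ A := Finset.mem_filter.mpr ⟨Finset.mem_univ _, hy.symm, hell1⟩
        have hgs : g s = f s := by
          rw [hg, Finset.sum_apply]
          rw [Finset.sum_eq_single_of_mem s hsA]
          · have h1 : e3 R s s = (1 : R) := if_pos rfl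
            have h2 : e3 R (mirror s) s = 0 := by
              rw [e3, if_neg]
              intro hst
              have e1 := congrArg (fun u : Flag3 P => u.1.2.1) hst
              exact hd (hy.symm.trans e1)
            simp [h1, h2]
          · intro t _ hts
            have h1 : e3 R t s = 0 := by
              rw [e3, if_neg (fun hst => hts hst.symm)]
            have h2 : e3 R (mirror t) s = 0 := by
              rw [e3, if_neg]
              intro hst
              have e1 := congrArg (fun u : Flag3 P => u.1.2.1) hst
              have e2 := congrArg (fun u : Flag3 P => u.1.2.2) hst
              exact hd (hy.symm.trans (e1.trans e2.symm))
            simp [h1, h2]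
        rw [hgs, sub_self]
      · have hy2 : s.1.2.1 = s.1.2.2 := by
          rcases mem_of_ell_eq_one hell1 s.2.1 s.2.2 with h | h
          · exact absurd h hy
          · exact h
        set t₀ : Flag3 P := ⟨(s.1.1, s.1.1, s.1.2.2), le_rfl, s.2.1.trans s.2.2⟩ with ht₀
        have ht₀A : t₀ ∈ A := Finset.mem_filter.mpr ⟨Finset.mem_univ _, rfl, hell1⟩
        have hmt₀ : mirror t₀ = s :=
          Subtype.ext (Prod.ext rfl (Prod.ext hy2.symm rfl))
        have hgs : g s = f t₀ := by
          rw [hg, Finset.sum_apply]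
          rw [Finset.sum_eq_single_of_mem t₀ ht₀A]
          · have h1 : e3 R t₀ s = 0 := by
              rw [e3, if_neg]
              intro hst
              have e1 : s.1.2.1 = s.1.1 := congrArg (fun u : Flag3 P => u.1.2.1) hst
              exact hd (e1.symm.trans hy2)
            have h2 : e3 R (mirror t₀) s = (1:R) := by rw [e3, if_pos hmt₀.symm]
            simp [h1, h2]
          · intro t htA hts
            obtain ⟨-, hyx, hell⟩ := Finset.mem_filter.mp htA
            have h1 : e3 R t s = 0 := by
              rw [e3, if_neg]
              intro hst
              apply hd
              have e0 : s.1.1 = t.1.1 := congrArg (fun u : Flag3 P => u.1.1) hst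
              have e1 : s.1.2.1 = t.1.2.1 := congrArg (fun u : Flag3 P => u.1.2.1) hst
              exact e0.trans (hyx.symm.symm.trans (e1.symm.trans hy2))
            have h2 : e3 R (mirror t) s = 0 := by
              rw [e3, if_neg]
              intro hst
              apply hts
              have e0 := congrArg (fun u : Flag3 P => u.1.1) hst
              have e2 := congrArg (fun u : Flag3 P => u.1.2.2) hst
              exact Subtype.ext
                (Prod.ext e0.symm (Prod.ext (hyx.symm.trans e0.symm) e2.symm))
            simp [h1, h2]
        have hfs : f t₀ = f s := by
          have hkey := hf2 s.1.1 s.1.2.2 (s.2.1.trans s.2.2) hell1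
          have hs' : s = ⟨(s.1.1, s.1.2.2, s.1.2.2), s.2.1.trans s.2.2, le_rfl⟩ :=
            Subtype.ext (Prod.ext rfl (Prod.ext hy2 rfl))
          exact hkey.trans (congrArg f hs'.symm)
        rw [hgs, hfs, sub_self]
  have hsplit : f = g + (f - g) := by ring
  rw [hsplit]
  exact Submodule.add_mem_sup hgcov hfg

end Big

/-- `Z^3_2(P,R) = [J^3_1, J^3_1]` equals `J^3_1 ⬝ J^3_1`, and equals the
internal direct sum of `span_R{e_{xxy} + e_{xyy} : l(x,y) = 1}` and `J^3_2(P,R)`;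
in particular it is closed under multiplication. -/
theorem Z3_two_description
    {P R : Type*} [PartialOrder P] [Fintype P] [DecidableEq P] [LocallyFiniteOrder P]
    [CommRing R] :
    commSub P R (J3 P R 1) (J3 P R 1) =
        Submodule.span R
          {h : Flag3 P → R | ∃ f ∈ J3 P R 1, ∃ g ∈ J3 P R 1, h = mul3 P R f g} ∧
    commSub P R (J3 P R 1) (J3 P R 1) = covPairSpan P R ⊔ J3 P R 2 ∧
    Disjoint (covPairSpan P R) (J3 P R 2) ∧
    (∀ f g : Flag3 P → R, f ∈ commSub P R (J3 P R 1) (J3 P R 1) →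
      g ∈ commSub P R (J3 P R 1) (J3 P R 1) →
      mul3 P R f g ∈ commSub P R (J3 P R 1) (J3 P R 1)) := by
    classical
  have h1 : commSub P R (J3 P R 1) (J3 P R 1) ≤
      Submodule.span R
        {h : Flag3 P → R | ∃ f ∈ J3 P R 1, ∃ g ∈ J3 P R 1, h = mul3 P R f g} := by
    rw [commSub, Submodule.span_le]
    rintro h ⟨f, hf, g, hg, rfl⟩
    exact sub_mem (Submodule.subset_span ⟨f, hf, g, hg, rfl⟩)
      (Submodule.subset_span ⟨g, hg, f, hf, rfl⟩)
  have h2 : Submodule.span R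
      {h : Flag3 P → R | ∃ f ∈ J3 P R 1, ∃ g ∈ J3 P R 1, h = mul3 P R f g}
      ≤ Wsub P R := by
    rw [Submodule.span_le]
    rintro h ⟨f, hf, g, hg, rfl⟩
    exact mul3_mem_W hf hg
  have h3 : Wsub P R ≤ covPairSpan P R ⊔ J3 P R 2 := W_le_sup
  have h4 : covPairSpan P R ⊔ J3 P R 2 ≤ commSub P R (J3 P R 1) (J3 P R 1) :=
    sup_le covPairSpan_le_commSub J3_two_le_commSub
  have eq1 : commSub P R (J3 P R 1) (J3 P R 1) =
      Submodule.span R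
        {h : Flag3 P → R | ∃ f ∈ J3 P R 1, ∃ g ∈ J3 P R 1, h = mul3 P R f g} :=
    le_antisymm h1 ((h2.trans h3).trans h4)
  have eq2 : commSub P R (J3 P R 1) (J3 P R 1) = covPairSpan P R ⊔ J3 P R 2 :=
    le_antisymm (h1.trans (h2.trans h3)) h4
  have hdisj : Disjoint (covPairSpan P R) (J3 P R 2) := by
    rw [Submodule.disjoint_def]
    intro f hfc hfJ
    funext t
    rw [Pi.zero_apply]
    by_cases h : ell t.1.1 t.1.2.2 = 1
    · exact hfJ t (by rw [h]; norm_num)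
    · exact covPairSpan_le_S3 hfc t h
  refine ⟨eq1, eq2, hdisj, ?_⟩
  intro f g hf hg
  rw [eq1]
  exact Submodule.subset_span ⟨f, commSub_le_J1 hf, g, commSub_le_J1 hg, rfl⟩
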